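/- arXiv:1708.06605 — 3 statements merged into one kernel-verified Lean document; each statement's English description precedes it below -/
import Mathlib

section
/- Let λ > 0, α > 0 and x > 0. Then (1/Γ(α)) ∫_0^x ln(λτ) (x−τ)^{α−1} dτ = x^α · (ln(x) + ln(λ) − γ − ψ(1+α)) / Γ(1+α), where γ is the Euler–Mascheroni constant and ψ(1+α) = Γ'(1+α)/Γ(1+α) is the digamma function; that is, the distributional differintegral of order α (with lower limit 0) of ln(λz) is z^α (ln(λz) − γ − ψ(1+α))/Γ(1+α). -/
open Real MeasureTheory Set Filter intervalIntegral

/-- Beta-type integrands are interval integrable on `[0,1]`. -/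
lemma beta_intervalIntegrable {p q : ℝ} (hp : -1 < p) (hq : -1 < q) :
    IntervalIntegrable (fun t : ℝ => t ^ p * (1 - t) ^ q) volume 0 1 := by
  have left : ∀ p q : ℝ, -1 < p →
      IntervalIntegrable (fun t : ℝ => t ^ p * (1 - t) ^ q) volume 0 (1/2) := by
    intro p q hp
    apply (intervalIntegrable_rpow' hp).mul_continuousOn
    intro t ht
    rw [uIcc_of_le (by norm_num : (0:ℝ) ≤ 1/2)] at ht
    have h1 : (0:ℝ) < 1 - t := by
      simp only [mem_Icc] at ht; linarith [ht.2]
    exact ((continuousAt_const.sub continuousAt_id).rpow_const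
      (Or.inl h1.ne')).continuousWithinAt
  refine (left p q hp).trans ?_
  have h2 := (left q p hq).comp_sub_left 1
  norm_num at h2
  have h3 : (fun x : ℝ => (1 - x) ^ q * x ^ p) = fun t : ℝ => t ^ p * (1 - t) ^ q := by
    funext t; exact mul_comm _ _
  rw [h3] at h2
  exact h2.symm

lemma abs_log_le {t : ℝ} (ht : 0 < t) (ht1 : t ≤ 1) :
    |Real.log t| ≤ 4 * t ^ (-(4:ℝ)⁻¹) := by
  have hpos : (0:ℝ) < t ^ (-(4:ℝ)⁻¹) := Real.rpow_pos_of_pos ht _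
  have hlog : Real.log (t ^ (-(4:ℝ)⁻¹)) ≤ t ^ (-(4:ℝ)⁻¹) - 1 :=
    Real.log_le_sub_one_of_pos hpos
  rw [Real.log_rpow ht] at hlog
  have habs : |Real.log t| = -Real.log t := abs_of_nonpos (Real.log_nonpos ht.le ht1)
  rw [habs]
  nlinarith [hpos]

lemma log_beta_integrableOn {q : ℝ} (hq : -1 < q) :
    IntegrableOn (fun t : ℝ => Real.log t * (1 - t) ^ q) (Ioc 0 1) volume := by
  have hb : IntegrableOn (fun t : ℝ => 4 * (t ^ (-(2:ℝ)⁻¹) * (1 - t) ^ q)) (Ioc 0 1) volume := by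
    apply Integrable.const_mul
    exact (intervalIntegrable_iff_integrableOn_Ioc_of_le zero_le_one).mp
      (beta_intervalIntegrable (by norm_num) hq)
  refine Integrable.mono' hb ?_ ?_
  · exact (Real.measurable_log.mul
      ((measurable_const.sub measurable_id).pow measurable_const)).aestronglyMeasurable
  · filter_upwards [ae_restrict_mem measurableSet_Ioc] with t ht
    have ht0 : 0 < t := ht.1
    have ht1 : t ≤ 1 := ht.2
    have h1 : (0:ℝ) ≤ (1 - t) ^ q := Real.rpow_nonneg (by linarith) q
    rw [norm_mul, Real.norm_eq_abs, Real.norm_eq_abs, abs_of_nonneg h1]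
    have h2 : |Real.log t| ≤ 4 * t ^ (-(4:ℝ)⁻¹) := abs_log_le ht0 ht1
    have h3 : t ^ (-(4:ℝ)⁻¹) ≤ t ^ (-(2:ℝ)⁻¹) :=
      Real.rpow_le_rpow_of_exponent_ge ht0 ht1 (by norm_num)
    calc |Real.log t| * (1 - t) ^ q ≤ (4 * t ^ (-(2:ℝ)⁻¹)) * (1 - t) ^ q := by
          apply mul_le_mul_of_nonneg_right _ h1
          exact h2.trans (by nlinarith [Real.rpow_pos_of_pos ht0 (-(4:ℝ)⁻¹)])
      _ = 4 * (t ^ (-(2:ℝ)⁻¹) * (1 - t) ^ q) := by ring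

lemma beta_eq_Gamma {s α : ℝ} (hs : 0 < s) (hα : 0 < α) :
    ∫ t in (0:ℝ)..1, t ^ (s - 1) * (1 - t) ^ (α - 1) =
      Real.Gamma s * Real.Gamma α / Real.Gamma (s + α) := by
  have hc := Complex.Gamma_mul_Gamma_eq_betaIntegral
    (s := (s : ℂ)) (t := (α : ℂ)) (by simpa using hs) (by simpa using hα)
  have hb : Complex.betaIntegral s α
      = ((∫ t in (0:ℝ)..1, t ^ (s - 1) * (1 - t) ^ (α - 1) : ℝ) : ℂ) := by
    rw [Complex.betaIntegral, ← intervalIntegral.integral_ofReal]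
    refine intervalIntegral.integral_congr fun t ht => ?_
    rw [uIcc_of_le zero_le_one] at ht
    rw [Complex.ofReal_mul, Complex.ofReal_cpow ht.1, Complex.ofReal_cpow (by linarith [ht.2])]
    push_cast
    ring
  rw [hb] at hc
  rw [show ((s : ℂ) + (α : ℂ)) = ((s + α : ℝ) : ℂ) by push_cast; ring] at hc
  rw [Complex.Gamma_ofReal, Complex.Gamma_ofReal, Complex.Gamma_ofReal] at hc
  have hc' : Real.Gamma s * Real.Gamma α
      = Real.Gamma (s + α) * ∫ t in (0:ℝ)..1, t ^ (s - 1) * (1 - t) ^ (α - 1) := by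
    exact_mod_cast hc
  have hne : Real.Gamma (s + α) ≠ 0 := (Real.Gamma_pos_of_pos (by linarith)).ne'
  field_simp [hc']
  rw [hc']; ring

set_option maxHeartbeats 1000000 in
lemma K_eq {α : ℝ} (hα : 0 < α) :
    ∫ t in (0:ℝ)..1, Real.log t * (1 - t) ^ (α - 1) =
      (-Real.eulerMascheroniConstant - deriv Real.Gamma (1 + α) / Real.Gamma (1 + α)) / α := by
  have hα1 : (-1 : ℝ) < α - 1 := by linarith
  set μ := volume.restrict (Ioc (0:ℝ) 1) with hμ
  set F : ℝ → ℝ → ℝ := fun s t => t ^ (s - 1) * (1 - t) ^ (α - 1) with hF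
  set F' : ℝ → ℝ → ℝ := fun s t => Real.log t * t ^ (s - 1) * (1 - t) ^ (α - 1) with hF'
  set bound : ℝ → ℝ := fun t => 4 * (t ^ (-(2:ℝ)⁻¹) * (1 - t) ^ (α - 1)) with hbound
  have hmeas : ∀ᶠ s in nhds (1:ℝ), AEStronglyMeasurable (F s) μ :=
    Eventually.of_forall fun s =>
      ((measurable_id.pow measurable_const).mul
        ((measurable_const.sub measurable_id).pow measurable_const)).aestronglyMeasurable
  have hint : Integrable (F 1) μ :=
    (intervalIntegrable_iff_integrableOn_Ioc_of_le zero_le_one).mp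
      (beta_intervalIntegrable (by norm_num) hα1)
  have hmeas' : AEStronglyMeasurable (F' 1) μ :=
    ((Real.measurable_log.mul (measurable_id.pow measurable_const)).mul
        ((measurable_const.sub measurable_id).pow measurable_const)).aestronglyMeasurable
  have hbnd : ∀ᵐ t ∂μ, ∀ s ∈ Metric.ball (1:ℝ) 4⁻¹, ‖F' s t‖ ≤ bound t := by
    filter_upwards [ae_restrict_mem measurableSet_Ioc] with t ht s hs
    have ht0 : 0 < t := ht.1
    have ht1 : t ≤ 1 := ht.2
    have hs' : |s - 1| < 4⁻¹ := by
      rw [Metric.mem_ball, Real.dist_eq] at hs; exact hs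
    have hs'' : -(4:ℝ)⁻¹ ≤ s - 1 := by
      have := abs_lt.mp hs'; linarith [this.1]
    have h1 : (0:ℝ) ≤ (1 - t) ^ (α - 1) := Real.rpow_nonneg (by linarith) _
    have h2 : (0:ℝ) < t ^ (s - 1) := Real.rpow_pos_of_pos ht0 _
    show ‖Real.log t * t ^ (s - 1) * (1 - t) ^ (α - 1)‖ ≤ _
    rw [norm_mul, norm_mul, Real.norm_eq_abs, Real.norm_eq_abs, Real.norm_eq_abs,
      abs_of_nonneg h1, abs_of_pos h2]
    have h3 : t ^ (s - 1) ≤ t ^ (-(4:ℝ)⁻¹) :=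
      Real.rpow_le_rpow_of_exponent_ge ht0 ht1 hs''
    have h4 : |Real.log t| ≤ 4 * t ^ (-(4:ℝ)⁻¹) := abs_log_le ht0 ht1
    have h5 : (0:ℝ) < t ^ (-(4:ℝ)⁻¹) := Real.rpow_pos_of_pos ht0 _
    have h6 : |Real.log t| * t ^ (s - 1) ≤ (4 * t ^ (-(4:ℝ)⁻¹)) * t ^ (-(4:ℝ)⁻¹) := by
      apply mul_le_mul h4 h3 h2.le
      positivity
    have h7 : t ^ (-(4:ℝ)⁻¹) * t ^ (-(4:ℝ)⁻¹) = t ^ (-(2:ℝ)⁻¹) := by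
      rw [← Real.rpow_add ht0]; norm_num
    calc |Real.log t| * t ^ (s - 1) * (1 - t) ^ (α - 1)
        ≤ (4 * t ^ (-(4:ℝ)⁻¹)) * t ^ (-(4:ℝ)⁻¹) * (1 - t) ^ (α - 1) :=
          mul_le_mul_of_nonneg_right h6 h1
      _ = 4 * (t ^ (-(2:ℝ)⁻¹) * (1 - t) ^ (α - 1)) := by rw [← h7]; ring
  have hbint : Integrable bound μ :=
    Integrable.const_mul
      ((intervalIntegrable_iff_integrableOn_Ioc_of_le zero_le_one).mp
        (beta_intervalIntegrable (by norm_num) hα1)) 4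
  have hdiff : ∀ᵐ t ∂μ, ∀ s ∈ Metric.ball (1:ℝ) 4⁻¹, HasDerivAt (F · t) (F' s t) s := by
    filter_upwards [ae_restrict_mem measurableSet_Ioc] with t ht s hs
    have h1 : HasDerivAt (fun s : ℝ => t ^ (s - 1)) (t ^ (s - 1) * Real.log t) s := by
      have h := (Real.hasStrictDerivAt_const_rpow ht.1 (s - 1)).hasDerivAt.comp s
        ((hasDerivAt_id s).sub_const 1)
      rw [mul_one] at h
      exact h
    have h2 := h1.mul_const ((1 - t) ^ (α - 1))
    show HasDerivAt (fun s => F s t) (F' s t) s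
    refine h2.congr_deriv ?_
    show t ^ (s - 1) * Real.log t * (1 - t) ^ (α - 1) = Real.log t * t ^ (s - 1) * (1 - t) ^ (α - 1)
    ring
  have key := _root_.hasDerivAt_integral_of_dominated_loc_of_deriv_le (E := ℝ)
    (F := F) (F' := F') (x₀ := (1:ℝ)) (bound := bound) (s := Metric.ball (1:ℝ) 4⁻¹) (μ := μ)
    (Metric.ball_mem_nhds _ (by norm_num)) hmeas hint hmeas' hbnd hbint hdiff
  obtain ⟨-, hB⟩ := key
  -- identify the derivative value
  have hval : (∫ t, F' 1 t ∂μ)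
      = ∫ t in (0:ℝ)..1, Real.log t * (1 - t) ^ (α - 1) := by
    rw [intervalIntegral.integral_of_le zero_le_one]
    simp only [hF', sub_self, Real.rpow_zero, mul_one]
    rfl
  rw [hval] at hB
  -- identify the function with the interval integral
  have hfun : (fun s => ∫ t, F s t ∂μ)
      = fun s => ∫ t in (0:ℝ)..1, t ^ (s - 1) * (1 - t) ^ (α - 1) := by
    funext s
    rw [intervalIntegral.integral_of_le zero_le_one]
  rw [hfun] at hB
  -- the Gamma-quotient function
  have heq : (fun s => ∫ t in (0:ℝ)..1, t ^ (s - 1) * (1 - t) ^ (α - 1))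
      =ᶠ[nhds (1:ℝ)] fun s => Real.Gamma s * Real.Gamma α / Real.Gamma (s + α) := by
    filter_upwards [eventually_gt_nhds zero_lt_one] with s hs
    exact beta_eq_Gamma hs hα
  have hdiffG : DifferentiableAt ℝ Real.Gamma (1 + α) :=
    Real.differentiableAt_Gamma fun m =>
      (show -(m:ℝ) < 1 + α by
        have : (0:ℝ) ≤ (m:ℝ) := m.cast_nonneg
        linarith).ne'
  have hden : HasDerivAt (fun s : ℝ => Real.Gamma (s + α)) (deriv Real.Gamma (1 + α)) 1 := by
    simpa [Function.comp_def] using (hdiffG.hasDerivAt.comp 1 ((hasDerivAt_id 1).add_const α))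
  have hne : Real.Gamma (1 + α) ≠ 0 := (Real.Gamma_pos_of_pos (by linarith)).ne'
  have hH : HasDerivAt (fun s => Real.Gamma s * Real.Gamma α / Real.Gamma (s + α))
      (((-Real.eulerMascheroniConstant) * Real.Gamma α * Real.Gamma (1 + α) -
        Real.Gamma 1 * Real.Gamma α * deriv Real.Gamma (1 + α)) / (Real.Gamma (1 + α)) ^ 2)
      1 := (Real.hasDerivAt_Gamma_one.mul_const (Real.Gamma α)).div hden hne
  have hB' := hH.congr_of_eventuallyEq heq
  have hKD := hB.unique hB'
  rw [hKD, Real.Gamma_one, show (1:ℝ) + α = α + 1 from add_comm 1 α,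
    Real.Gamma_add_one hα.ne']
  have hGα : Real.Gamma α ≠ 0 := (Real.Gamma_pos_of_pos hα).ne'
  field_simp

open Real

/-- The distributional differintegral of order `α` (with lower limit `0`) of `ln(λz)` is
`z^α (ln(z) + ln(λ) − γ − ψ(1+α))/Γ(1+α)`, where `γ` is the Euler–Mascheroni constant
and `ψ(1+α) = Γ'(1+α)/Γ(1+α)` is the digamma function. -/
theorem differintegral_log (lam α x : ℝ) (hlam : 0 < lam) (hα : 0 < α) (hx : 0 < x) :
    (1 / Real.Gamma α) * ∫ τ in (0 : ℝ)..x, Real.log (lam * τ) * (x - τ) ^ (α - 1) =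
      x ^ α * (Real.log x + Real.log lam - Real.eulerMascheroniConstant -
        deriv Real.Gamma (1 + α) / Real.Gamma (1 + α)) / Real.Gamma (1 + α) := by
  have hα1 : (-1 : ℝ) < α - 1 := by linarith
  have hΓα : 0 < Real.Gamma α := Real.Gamma_pos_of_pos hα
  have hΓ1α : Real.Gamma (1 + α) = α * Real.Gamma α := by
    rw [add_comm]; exact Real.Gamma_add_one hα.ne'
  have hK := K_eq hα
  -- Step 1: substitution τ = x t
  have h1 : (∫ τ in (0:ℝ)..x, Real.log (lam * τ) * (x - τ) ^ (α - 1))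
      = x * ∫ t in (0:ℝ)..1, Real.log (lam * (x * t)) * (x - x * t) ^ (α - 1) := by
    have h := intervalIntegral.integral_comp_mul_left (a := 0) (b := 1)
      (fun τ => Real.log (lam * τ) * (x - τ) ^ (α - 1)) hx.ne'
    rw [mul_zero, mul_one, smul_eq_mul] at h
    rw [h, ← mul_assoc, mul_inv_cancel₀ hx.ne', one_mul]
  -- Step 2: pointwise rewriting on (0,1]
  have h2 : (∫ t in (0:ℝ)..1, Real.log (lam * (x * t)) * (x - x * t) ^ (α - 1))
      = ∫ t in Ioc (0:ℝ) 1,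
          x ^ (α - 1) * ((Real.log lam + Real.log x + Real.log t) * (1 - t) ^ (α - 1)) := by
    rw [intervalIntegral.integral_of_le zero_le_one]
    refine setIntegral_congr_fun measurableSet_Ioc fun t ht => ?_
    have ht0 : 0 < t := ht.1
    have ht1 : t ≤ 1 := ht.2
    rw [Real.log_mul hlam.ne' (by positivity : x * t ≠ 0), Real.log_mul hx.ne' ht0.ne',
      show x - x * t = x * (1 - t) by ring, Real.mul_rpow hx.le (by linarith)]
    ring
  -- integrability facts
  have hone : IntegrableOn (fun t : ℝ => (1 - t) ^ (α - 1)) (Ioc (0:ℝ) 1) volume := by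
    refine (intervalIntegrable_iff_integrableOn_Ioc_of_le zero_le_one).mp ?_
    simpa using (intervalIntegrable_rpow' (a := 1) (b := 0) hα1).comp_sub_left 1
  have hIa : IntegrableOn
      (fun t : ℝ => (Real.log lam + Real.log x) * (1 - t) ^ (α - 1)) (Ioc (0:ℝ) 1) volume :=
    hone.const_mul _
  have hIb : IntegrableOn (fun t : ℝ => Real.log t * (1 - t) ^ (α - 1)) (Ioc (0:ℝ) 1) volume :=
    log_beta_integrableOn hα1
  -- Step 3: split the integral
  have h3 : (∫ t in Ioc (0:ℝ) 1,
        (Real.log lam + Real.log x + Real.log t) * (1 - t) ^ (α - 1))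
      = (Real.log lam + Real.log x) * (∫ t in Ioc (0:ℝ) 1, (1 - t) ^ (α - 1))
        + ∫ t in Ioc (0:ℝ) 1, Real.log t * (1 - t) ^ (α - 1) := by
    have hsplit : (fun t : ℝ => (Real.log lam + Real.log x + Real.log t) * (1 - t) ^ (α - 1))
        = fun t : ℝ => (Real.log lam + Real.log x) * (1 - t) ^ (α - 1)
          + Real.log t * (1 - t) ^ (α - 1) := by
      funext t; ring
    rw [hsplit, integral_add hIa hIb, MeasureTheory.integral_const_mul]
  -- Step 4: the elementary integral
  have h4 : (∫ t in Ioc (0:ℝ) 1, (1 - t) ^ (α - 1)) = 1 / α := by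
    rw [← intervalIntegral.integral_of_le zero_le_one,
      intervalIntegral.integral_comp_sub_left (fun u : ℝ => u ^ (α - 1)) 1]
    norm_num
    rw [integral_rpow (Or.inl hα1), show α - 1 + 1 = α by ring, Real.one_rpow,
      Real.zero_rpow hα.ne']
    norm_num
  -- Step 5: the log integral
  have h5 : (∫ t in Ioc (0:ℝ) 1, Real.log t * (1 - t) ^ (α - 1))
      = (-Real.eulerMascheroniConstant - deriv Real.Gamma (1 + α) / Real.Gamma (1 + α)) / α := by
    rw [← intervalIntegral.integral_of_le zero_le_one]
    exact hK
  have hxx : x ^ α = x * x ^ (α - 1) := by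
    have h := Real.rpow_add hx 1 (α - 1)
    rw [show (1:ℝ) + (α - 1) = α by ring, Real.rpow_one] at h
    exact h
  rw [h1, h2, MeasureTheory.integral_const_mul, h3, h4, h5, hΓ1α]
  rw [hxx]
  field_simp
  ring
end

section
/- Let α > 0 and let z < 0. Then (1/Γ(α)) ∫_{−∞}^z (e^{−ζ} − 1)^{−1} (z−ζ)^{α−1} dζ = Σ_{k=1}^∞ e^{kz} / k^α; that is, the distributional differintegral of order α of 1/(e^{−z} − 1) is the polylogarithm Li_α(e^z). -/
open MeasureTheory Real

lemma diffint_aux_series (u : ℝ) (hu : u < 0) :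
    (Real.exp (-u) - 1)⁻¹ = ∑' k : ℕ, Real.exp (((k : ℝ) + 1) * u) := by
  have hw0 : 0 < Real.exp u := Real.exp_pos u
  have hw1 : Real.exp u < 1 := Real.exp_lt_one_iff.mpr hu
  have hsum : ∑' k : ℕ, Real.exp (((k : ℝ) + 1) * u)
      = Real.exp u * ∑' k : ℕ, (Real.exp u) ^ k := by
    rw [← tsum_mul_left]
    congr 1; ext k
    rw [← Real.exp_nat_mul, ← Real.exp_add]
    ring_nf
  rw [hsum, tsum_geometric_of_lt_one hw0.le hw1]
  rw [Real.exp_neg]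
  have h1 : (Real.exp u)⁻¹ - 1 = (1 - Real.exp u) / Real.exp u := by
    field_simp
  rw [h1]
  field_simp

/-- The distributional differintegral of order `α` of `1/(e^(−z) − 1)` is the
polylogarithm `Li_α(e^z) = Σ_{k≥1} e^(kz)/k^α` (for `z < 0`). -/
theorem differintegral_polylog (α z : ℝ) (hα : 0 < α) (hz : z < 0) :
    (1 / Real.Gamma α) * ∫ ζ in Set.Iic z, (Real.exp (-ζ) - 1)⁻¹ * (z - ζ) ^ (α - 1) =
      ∑' k : ℕ, Real.exp (((k : ℝ) + 1) * z) / ((k : ℝ) + 1) ^ α := by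
  have hΓ : 0 < Real.Gamma α := Real.Gamma_pos_of_pos hα
  set f : ℝ → ℝ := fun ζ => (Real.exp (-ζ) - 1)⁻¹ * (z - ζ) ^ (α - 1) with hf
  -- change of variables ζ = z - x
  have h1 : ∫ ζ in Set.Iic z, f ζ = ∫ x in Set.Ioi (0:ℝ), f (z - x) := by
    have hemb := (MeasurableEquiv.subLeft z).measurableEmbedding
    have hmp : MeasurePreserving (fun x : ℝ => z - x) volume volume :=
      Measure.measurePreserving_sub_left volume z
    have := hmp.setIntegral_preimage_emb hemb f (Set.Iic z)
    have hpre : (fun x : ℝ => z - x) ⁻¹' Set.Iic z = Set.Ici 0 := by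
      ext x; simp [Set.mem_Iic, sub_le_iff_le_add]
    rw [hpre] at this
    rw [← this, MeasureTheory.integral_Ici_eq_integral_Ioi]
  -- the summand functions
  set F : ℕ → ℝ → ℝ := fun k x =>
    Real.exp (((k : ℝ) + 1) * z) * (x ^ (α - 1) * Real.exp (-((k : ℝ) + 1) * x)) with hF
  have hFint : ∀ k : ℕ, IntegrableOn (F k) (Set.Ioi 0) := by
    intro k
    have hb : (0:ℝ) < (k : ℝ) + 1 := by positivity
    have := integrableOn_rpow_mul_exp_neg_mul_rpow (p := 1) (s := α - 1) (b := (k : ℝ) + 1)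
      (by linarith) one_pos hb
    simp only [Real.rpow_one] at this
    exact this.const_mul _
  have hFval : ∀ k : ℕ, ∫ x in Set.Ioi (0:ℝ), F k x
      = Real.exp (((k : ℝ) + 1) * z) * ((1 / ((k : ℝ) + 1)) ^ α * Real.Gamma α) := by
    intro k
    have hb : (0:ℝ) < (k : ℝ) + 1 := by positivity
    rw [hF]
    simp only [neg_mul]
    rw [MeasureTheory.integral_const_mul, Real.integral_rpow_mul_exp_neg_mul_Ioi hα hb]
  -- pointwise equality on Ioi 0
  have hpt : ∀ x ∈ Set.Ioi (0:ℝ), f (z - x) = ∑' k : ℕ, F k x := by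
    intro x hx
    have hu : z - x < 0 := by have := hx.out; linarith
    show (Real.exp (-(z - x)) - 1)⁻¹ * (z - (z - x)) ^ (α - 1) = _
    rw [diffint_aux_series (z - x) hu, sub_sub_cancel, ← tsum_mul_right]
    congr 1; ext k
    show Real.exp (((k : ℝ) + 1) * (z - x)) * x ^ (α - 1) = _
    rw [show ((k : ℝ) + 1) * (z - x) = ((k : ℝ) + 1) * z + -((k : ℝ) + 1) * x by ring,
      Real.exp_add]
    ring
  -- summability of norms of integrals
  have hnorm : Summable fun k : ℕ => ∫ x in Set.Ioi (0:ℝ), ‖F k x‖ := by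
    have heq : ∀ k : ℕ, ∫ x in Set.Ioi (0:ℝ), ‖F k x‖ = ∫ x in Set.Ioi (0:ℝ), F k x := by
      intro k
      refine setIntegral_congr_fun measurableSet_Ioi (fun x hx => ?_)
      have hx0 : 0 < x := hx
      rw [Real.norm_eq_abs, abs_of_nonneg]
      rw [hF]; positivity
    simp_rw [heq, hFval]
    apply Summable.of_nonneg_of_le (fun k => by positivity)
      (fun k => ?_) ((summable_geometric_of_lt_one (Real.exp_pos z).le
        (Real.exp_lt_one_iff.mpr hz)).mul_right (Real.Gamma α))
    have h1 : (1 / ((k : ℝ) + 1)) ^ α ≤ 1 := by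
      apply Real.rpow_le_one (by positivity) _ hα.le
      rw [div_le_one (by positivity)]; linarith
    have h2 : Real.exp (((k : ℝ) + 1) * z) = (Real.exp z) ^ (k + 1) := by
      rw [← Real.exp_nat_mul]; push_cast; ring_nf
    calc Real.exp (((k : ℝ) + 1) * z) * ((1 / ((k : ℝ) + 1)) ^ α * Real.Gamma α)
        ≤ Real.exp (((k : ℝ) + 1) * z) * (1 * Real.Gamma α) := by
          apply mul_le_mul_of_nonneg_left _ (Real.exp_pos _).le
          exact mul_le_mul_of_nonneg_right h1 hΓ.le
      _ = (Real.exp z) ^ (k + 1) * Real.Gamma α := by rw [h2, one_mul]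
      _ ≤ (Real.exp z) ^ k * Real.Gamma α := by
          apply mul_le_mul_of_nonneg_right _ hΓ.le
          exact pow_le_pow_of_le_one (Real.exp_pos z).le
            (Real.exp_lt_one_iff.mpr hz).le (Nat.le_succ k)
  -- swap sum and integral
  have hswap : HasSum (fun k => ∫ x in Set.Ioi (0:ℝ), F k x)
      (∫ x in Set.Ioi (0:ℝ), ∑' k, F k x) :=
    hasSum_integral_of_summable_integral_norm hFint hnorm
  have h2 : ∫ x in Set.Ioi (0:ℝ), f (z - x) = ∑' k, ∫ x in Set.Ioi (0:ℝ), F k x := by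
    rw [hswap.tsum_eq]
    exact setIntegral_congr_fun measurableSet_Ioi hpt
  rw [h1, h2, ← tsum_mul_left]
  congr 1; ext k
  rw [hFval]
  have hb : (0:ℝ) < (k : ℝ) + 1 := by positivity
  have hpow : (1 / ((k : ℝ) + 1)) ^ α = (((k : ℝ) + 1) ^ α)⁻¹ := by
    rw [one_div, Real.inv_rpow hb.le]
  rw [hpow]
  have hk : ((k : ℝ) + 1) ^ α ≠ 0 := (Real.rpow_pos_of_pos hb α).ne'
  field_simp
end

section
/- Let f : ℝ → ℝ be continuous with compact support contained in [0, ∞), let α > 0 and let s > 0. Then ∫_0^∞ e^{−st} (J^α f)(t) dt = s^{−α} · ∫_0^∞ e^{−st} f(t) dt, where (J^α f)(t) = (1/Γ(α)) ∫_0^t f(τ)(t−τ)^{α−1} dτ; that is, the Laplace transform of the distributional differintegral of order α of f equals s^{−α} times the Laplace transform of f. -/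
open MeasureTheory Real

/-- The distributional differintegral of order `α` with lower limit `0`. -/
noncomputable def J₀ (α : ℝ) (f : ℝ → ℝ) (t : ℝ) : ℝ :=
  (1 / Real.Gamma α) * ∫ τ in (0 : ℝ)..t, f τ * (t - τ) ^ (α - 1)

/-- The Laplace transform of the distributional differintegral of order `α` of `f`
equals `s^(−α)` times the Laplace transform of `f`. -/
theorem laplace_differintegral (f : ℝ → ℝ) (hf : Continuous f)
    (hsupp : HasCompactSupport f) (hpos : tsupport f ⊆ Set.Ici 0)
    (α s : ℝ) (hα : 0 < α) (hs : 0 < s) :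
    ∫ t in Set.Ioi (0 : ℝ), Real.exp (-s * t) * J₀ α f t =
      s ^ (-α) * ∫ t in Set.Ioi (0 : ℝ), Real.exp (-s * t) * f t := by
  set φ : ℝ → ℝ := fun τ => Real.exp (-s * τ) * f τ with hφdef
  set ψ : ℝ → ℝ := fun u =>
    Set.indicator (Set.Ioi (0 : ℝ)) (fun u => Real.exp (-s * u) * u ^ (α - 1)) u with hψdef
  have hΓ : (0 : ℝ) < Real.Gamma α := Real.Gamma_pos_of_pos hα
  -- f vanishes on negatives
  have hf0 : ∀ τ : ℝ, τ < 0 → f τ = 0 := by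
    intro τ hτ
    apply image_eq_zero_of_notMem_tsupport
    intro hm
    exact absurd (hpos hm) (not_le.2 hτ)
  -- φ is integrable
  have hφc : Continuous φ := (Real.continuous_exp.comp (continuous_const.mul continuous_id)).mul hf
  have hφsupp : HasCompactSupport φ := hsupp.mul_left
  have hφ : Integrable φ := hφc.integrable_of_hasCompactSupport hφsupp
  -- ψ is integrable
  have hψint : IntegrableOn (fun u : ℝ => Real.exp (-s * u) * u ^ (α - 1)) (Set.Ioi 0) := by
    have h := integrableOn_rpow_mul_exp_neg_mul_rpow (p := 1) (s := α - 1) (b := s)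
      (by linarith) one_pos hs
    refine (h.congr_fun (fun x hx => ?_) measurableSet_Ioi)
    simp [Real.rpow_one, mul_comm]
  have hψmeas : MeasurableSet (Set.Ioi (0 : ℝ)) := measurableSet_Ioi
  have hψ : Integrable ψ := (integrable_indicator_iff hψmeas).2 hψint
  -- pointwise: convolution integrand equality (a.e. in τ) for fixed t > 0
  have hae : ∀ᵐ τ : ℝ, τ ≠ 0 := by
    have : ({(0 : ℝ)} : Set ℝ)ᶜ ∈ MeasureTheory.ae volume :=
      compl_mem_ae_iff.2 (measure_singleton 0)
    filter_upwards [this] with τ hτ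
    simpa using hτ
  have hconv : ∀ t : ℝ, 0 < t →
      (∫ τ : ℝ, φ τ * ψ (t - τ)) =
        Real.exp (-s * t) * ∫ τ in Set.Ioo (0 : ℝ) t, f τ * (t - τ) ^ (α - 1) := by
    intro t ht
    have h1 : (fun τ : ℝ => φ τ * ψ (t - τ)) =ᵐ[volume]
        Set.indicator (Set.Ioo (0 : ℝ) t)
          (fun τ => Real.exp (-s * t) * (f τ * (t - τ) ^ (α - 1))) := by
      filter_upwards [hae] with τ hτ0
      rcases lt_trichotomy τ 0 with h | h | h
      · simp [hφdef, hf0 τ h, Set.indicator_of_notMem (by simp [Set.mem_Ioo, not_and_or, h.not_gt] : τ ∉ Set.Ioo (0:ℝ) t)]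
      · exact absurd h hτ0
      · rcases lt_or_ge τ t with h2 | h2
        · have hmem : τ ∈ Set.Ioo (0 : ℝ) t := ⟨h, h2⟩
          have hmem2 : t - τ ∈ Set.Ioi (0 : ℝ) := by simp; linarith
          rw [Set.indicator_of_mem hmem, hψdef]
          simp only
          rw [Set.indicator_of_mem hmem2]
          rw [show Real.exp (-s * t) = Real.exp (-s * τ) * Real.exp (-s * (t - τ)) by
            rw [← Real.exp_add]; ring_nf]
          ring
        · have hnm : τ ∉ Set.Ioo (0 : ℝ) t := by simp [Set.mem_Ioo, h2.not_gt]
          have hnm2 : t - τ ∉ Set.Ioi (0 : ℝ) := by simp; linarith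
          rw [Set.indicator_of_notMem hnm, hψdef]
          simp only
          rw [Set.indicator_of_notMem hnm2, mul_zero]
    rw [integral_congr_ae h1, integral_indicator measurableSet_Ioo, integral_const_mul]
  -- the convolution vanishes for t ≤ 0
  have hconv0 : ∀ t : ℝ, t ∉ Set.Ioi (0 : ℝ) → (∫ τ : ℝ, φ τ * ψ (t - τ)) = 0 := by
    intro t ht
    rw [Set.mem_Ioi, not_lt] at ht
    have : ∀ τ : ℝ, φ τ * ψ (t - τ) = 0 := by
      intro τ
      rcases lt_or_ge τ 0 with h | h
      · simp [hφdef, hf0 τ h]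
      · have : t - τ ∉ Set.Ioi (0 : ℝ) := by simp; linarith
        rw [hψdef]; simp only
        rw [Set.indicator_of_notMem this, mul_zero]
    simp only [this, integral_zero]
  -- Fubini via integral_convolution
  have hfub : (∫ t : ℝ, ∫ τ : ℝ, φ τ * ψ (t - τ)) = (∫ τ : ℝ, φ τ) * (∫ u : ℝ, ψ u) := by
    have := integral_convolution (ContinuousLinearMap.mul ℝ ℝ) hφ hψ
      (μ := volume) (ν := volume)
    simpa [convolution] using this
  -- compute ∫ ψ
  have hψval : (∫ u : ℝ, ψ u) = Real.Gamma α * s ^ (-α) := by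
    rw [hψdef, integral_indicator hψmeas]
    have := integral_rpow_mul_exp_neg_mul_Ioi hα hs
    rw [show (∫ u in Set.Ioi (0:ℝ), Real.exp (-s * u) * u ^ (α - 1)) =
        ∫ u in Set.Ioi (0:ℝ), u ^ (α - 1) * Real.exp (-(s * u)) by
      refine setIntegral_congr_fun measurableSet_Ioi (fun x _ => ?_)
      rw [neg_mul, mul_comm], this]
    rw [one_div, Real.inv_rpow hs.le, ← Real.rpow_neg hs.le]
    ring
  -- compute ∫ φ over ℝ as the Laplace transform of f
  have hφval : (∫ τ : ℝ, φ τ) = ∫ t in Set.Ioi (0 : ℝ), φ t := by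
    rw [← setIntegral_eq_integral_of_forall_compl_eq_zero (s := Set.Ici (0:ℝ))
      (fun x hx => by
        have : x < 0 := not_le.1 hx
        simp [hφdef, hf0 x this]),
      integral_Ici_eq_integral_Ioi]
  -- now assemble
  have hJ : ∀ t ∈ Set.Ioi (0 : ℝ), Real.exp (-s * t) * J₀ α f t =
      (1 / Real.Gamma α) * ∫ τ : ℝ, φ τ * ψ (t - τ) := by
    intro t ht
    rw [Set.mem_Ioi] at ht
    rw [hconv t ht, J₀, intervalIntegral.integral_of_le ht.le, integral_Ioc_eq_integral_Ioo]
    ring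
  rw [setIntegral_congr_fun measurableSet_Ioi hJ, integral_const_mul,
    setIntegral_eq_integral_of_forall_compl_eq_zero
      (fun t ht => by rw [hconv0 t ht]),
    hfub, hψval, hφval]
  field_simp
end
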